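/- Let Cyl : K → K be a functor on a category K with pushouts, admitting a right adjoint Path : K → K, equipped with natural transformations γ : Id ⊔ Id ⇒ Cyl and σ : Cyl ⇒ Id with σ ∘ γ the codiagonal. Fix an object i. Define Cyl_i : i↓K → i↓K on (e : i → X) as the pushout of Cyl(e) : Cyl(i) → Cyl(X) along σ_i : Cyl(i) → i, and define Path_i : i↓K → i↓K on (i → Y) as the composite i → Path(i) → Path(Y), where i → Path(i) is the adjoint transpose of σ_i. Then Cyl_i is left adjoint to Path_i. -/

import Mathlib

open CategoryTheory CategoryTheory.Limits

universe v u

variable {K : Type u} [Category.{v} K] [HasPushouts K]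

/-- The induced cylinder `Cyl_i` on the coslice category `i↓K`: on an object `e : i ⟶ X`
it is the pushout of `Cyl(e) : Cyl(i) ⟶ Cyl(X)` along `σ_i : Cyl(i) ⟶ i`. -/
@[simps]
noncomputable def cylUnder (Cyl : K ⥤ K) (σ : Cyl ⟶ 𝟭 K) (i : K) : Under i ⥤ Under i where
  obj e := Under.mk (pushout.inl (σ.app i) (Cyl.map e.hom))
  map {e e'} m := Under.homMk
    (pushout.map (σ.app i) (Cyl.map e.hom) (σ.app i) (Cyl.map e'.hom)
      (𝟙 i) (Cyl.map m.right) (𝟙 (Cyl.obj i))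
      (by simp) (by simp [← Functor.map_comp, Under.w m]))
    (by exact (pushout.inl_desc _ _ _).trans (Category.id_comp _))
  map_id e := by
    apply CommaMorphism.ext
    · rfl
    · apply pushout.hom_ext <;> simp
  map_comp {e e' e''} m m' := by
    apply CommaMorphism.ext
    · rfl
    · simp only [Under.comp_right, Under.homMk_right]
      rw [pushout.map_comp]
      congr 1 <;> simp

/-- The induced path functor `Path_i` on the coslice category `i↓K`: on an object
`i ⟶ Y` it is the composite `i ⟶ Path(i) ⟶ Path(Y)` where `i ⟶ Path(i)` is the
adjoint transpose of `σ_i`. -/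
@[simps]
def pathUnder (Cyl Path : K ⥤ K) (adj : Cyl ⊣ Path) (σ : Cyl ⟶ 𝟭 K) (i : K) :
    Under i ⥤ Under i where
  obj y := Under.mk ((adj.homEquiv i i (σ.app i)) ≫ Path.map y.hom)
  map {y y'} m := Under.homMk (Path.map m.right)
    (by simp [← Functor.map_comp, Under.w m])

/-- `Cyl_i` is left adjoint to `Path_i`. -/
theorem cylUnder_adj_pathUnder [HasBinaryCoproducts K]
    (Cyl Path : K ⥤ K) (adj : Cyl ⊣ Path) (σ : Cyl ⟶ 𝟭 K)
    (γ : ∀ X : K, X ⨿ X ⟶ Cyl.obj X)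
    (γ_natural : ∀ {X Y : K} (f : X ⟶ Y), coprod.map f f ≫ γ Y = γ X ≫ Cyl.map f)
    (hσγ : ∀ X : K, γ X ≫ σ.app X = codiag X) (i : K) :
    Nonempty (cylUnder Cyl σ i ⊣ pathUnder Cyl Path adj σ i) := by

  refine ⟨Adjunction.mkOfHomEquiv
    { homEquiv := fun e f =>
        { toFun := fun m => Under.homMk (adj.homEquiv e.right f.right
            (pushout.inr (σ.app i) (Cyl.map e.hom) ≫ m.right))
            (by
              dsimp only [pathUnder_obj, Under.mk_hom, Functor.id_obj]
              erw [← adj.homEquiv_naturality_left]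
              have h1 : Cyl.map e.hom ≫ pushout.inr (σ.app i) (Cyl.map e.hom) ≫ m.right
                  = σ.app i ≫ pushout.inl (σ.app i) (Cyl.map e.hom) ≫ m.right := by
                erw [← Category.assoc, ← pushout.condition, Category.assoc]
              have h2 : pushout.inl (σ.app i) (Cyl.map e.hom) ≫ m.right = f.hom := Under.w m
              rw [h1, h2]
              erw [adj.homEquiv_naturality_right]; rfl)
        , invFun := fun n => Under.homMk (pushout.desc f.hom
            ((adj.homEquiv e.right f.right).symm n.right)
            (by
              have h := Under.w n
              change e.hom ≫ n.right = adj.homEquiv i i (σ.app i) ≫ Path.map f.hom at h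
              have h2 := congrArg (adj.homEquiv i f.right).symm h
              erw [adj.homEquiv_naturality_left_symm,
                adj.homEquiv_naturality_right_symm,
                Equiv.symm_apply_apply] at h2
              exact h2.symm))
            (by exact pushout.inl_desc _ _ _)
        , left_inv := fun m => by
            apply CommaMorphism.ext
            · rfl
            · apply pushout.hom_ext
              · exact (pushout.inl_desc _ _ _).trans (Under.w m).symm
              · exact (pushout.inr_desc _ _ _).trans (Equiv.symm_apply_apply _ _)
        , right_inv := fun n => by
            apply CommaMorphism.ext
            · rfl
            · exact (congrArg (adj.homEquiv e.right f.right) (pushout.inr_desc _ _ _)).trans (Equiv.apply_symm_apply _ _) }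
      homEquiv_naturality_left_symm := fun {e e' f} g n => by
        apply CommaMorphism.ext
        · rfl
        · apply pushout.hom_ext
          · show pushout.inl _ _ ≫ pushout.desc _ _ _ = pushout.inl _ _ ≫ (pushout.map _ _ _ _ (𝟙 i) (Cyl.map g.right) (𝟙 (Cyl.obj i)) (by simp) (by simp [← Functor.map_comp, Under.w g]) ≫ pushout.desc _ _ _)
            rw [pushout.inl_desc, pushout.inl_desc_assoc, Category.id_comp, pushout.inl_desc]
          · show pushout.inr _ _ ≫ pushout.desc _ _ _ = pushout.inr _ _ ≫ (pushout.map _ _ _ _ (𝟙 i) (Cyl.map g.right) (𝟙 (Cyl.obj i)) (by simp) (by simp [← Functor.map_comp, Under.w g]) ≫ pushout.desc _ _ _)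
            rw [pushout.inr_desc, pushout.inr_desc_assoc]
            erw [Category.assoc, pushout.inr_desc]
            exact adj.homEquiv_naturality_left_symm _ _
      homEquiv_naturality_right := fun {e f f'} m g => by
        apply CommaMorphism.ext
        · rfl
        · exact (congrArg _ (Category.assoc _ _ _).symm).trans (adj.homEquiv_naturality_right _ _) }⟩
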